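/- Let ρ : [0,∞) → [0,∞) be a non-negative, non-decreasing continuous function with ρ(t) = 0 iff t = 0 and ∫_{0+} ds/ρ(s) = ∞. Let u, g be non-negative continuous functions on [0,∞) with ∫_0^t g(s) ds < ∞ for all t. If u(t) ≤ ∫_0^t g(s)ρ(u(s)) ds for all t ≥ 0, then u(t) = 0 for all t ≥ 0. -/

import Mathlib

open MeasureTheory Set intervalIntegral

/-- Vanishing case of the Bihari–LaSalle inequality (`f ≡ 0`):
if `u(t) ≤ ∫_0^t g(s) ρ(u(s)) ds` for all `t ≥ 0`, then `u ≡ 0`. -/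
theorem bihari_vanishing
    (ρ u g : ℝ → ℝ)
    (hρc : ContinuousOn ρ (Set.Ici 0))
    (hρnonneg : ∀ t ≥ (0:ℝ), 0 ≤ ρ t)
    (hρmono : MonotoneOn ρ (Set.Ici 0))
    (hρzero : ∀ t ≥ (0:ℝ), (ρ t = 0 ↔ t = 0))
    (hOsgood : ∀ a > (0:ℝ),
      ¬ IntervalIntegrable (fun s => 1 / ρ s) MeasureTheory.volume 0 a)
    (hu : ContinuousOn u (Set.Ici 0)) (hunonneg : ∀ t ≥ (0:ℝ), 0 ≤ u t)
    (hg : ContinuousOn g (Set.Ici 0)) (hgnonneg : ∀ t ≥ (0:ℝ), 0 ≤ g t)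
    (hgint : ∀ t ≥ (0:ℝ), IntervalIntegrable g MeasureTheory.volume 0 t)
    (hbound : ∀ t ≥ (0:ℝ), u t ≤ ∫ s in (0:ℝ)..t, g s * ρ (u s)) :
    ∀ t ≥ (0:ℝ), u t = 0 := by
  intro t₀ ht₀
  by_contra hne
  have hupos : 0 < u t₀ := lt_of_le_of_ne (hunonneg t₀ ht₀) (Ne.symm hne)
  -- positivity of ρ on positives
  have hρpos : ∀ x > (0:ℝ), 0 < ρ x := fun x hx =>
    lt_of_le_of_ne (hρnonneg x hx.le) (fun h => hx.ne' ((hρzero x hx.le).1 h.symm))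
  -- the integrand F
  set F : ℝ → ℝ := fun s => g s * ρ (u s) with hFdef
  have hFc : ContinuousOn F (Set.Ici 0) :=
    hg.mul (hρc.comp hu (fun s hs => hunonneg s hs))
  have hFnonneg : ∀ s ≥ (0:ℝ), 0 ≤ F s := fun s hs =>
    mul_nonneg (hgnonneg s hs) (hρnonneg _ (hunonneg s hs))
  have hFint : ∀ t1 t2 : ℝ, 0 ≤ t1 → 0 ≤ t2 → IntervalIntegrable F volume t1 t2 := by
    intro t1 t2 h1 h2
    exact (hFc.mono (fun x hx => le_trans (le_min h1 h2) hx.1)).intervalIntegrable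
  set v : ℝ → ℝ := fun t => ∫ s in (0:ℝ)..t, F s with hvdef
  have hv0 : v 0 = 0 := integral_same
  have hvnonneg : ∀ t ≥ (0:ℝ), 0 ≤ v t := fun t ht =>
    intervalIntegral.integral_nonneg ht (fun s hs => hFnonneg s hs.1)
  have hvmono : ∀ s t : ℝ, 0 ≤ s → s ≤ t → v s ≤ v t := by
    intro s t hs hst
    have h1 : IntervalIntegrable F volume 0 s := hFint 0 s le_rfl hs
    have h2 : IntervalIntegrable F volume s t := hFint s t hs (hs.trans hst)
    have := intervalIntegral.integral_add_adjacent_intervals h1 h2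
    have hnn : 0 ≤ ∫ x in s..t, F x :=
      intervalIntegral.integral_nonneg hst (fun x hx => hFnonneg x (hs.trans hx.1))
    simp only [hvdef]
    linarith [this]
  have hule : ∀ t ≥ (0:ℝ), u t ≤ v t := hbound
  have ht₀pos : 0 < t₀ := by
    rcases lt_or_eq_of_le ht₀ with h | h
    · exact h
    · exfalso
      have := hbound 0 le_rfl
      rw [integral_same] at this
      rw [← h] at hupos
      linarith
  set a : ℝ := v t₀ with hadef
  have hapos : 0 < a := lt_of_lt_of_le hupos (hule t₀ ht₀)
  -- continuity and integrability of 1/ρ away from 0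
  have hinvc : ContinuousOn (fun s => 1 / ρ s) (Set.Ioi 0) :=
    continuousOn_const.div (hρc.mono Ioi_subset_Ici_self)
      (fun x hx => (hρpos x hx).ne')
  have hinvint : ∀ c d : ℝ, 0 < c → 0 < d →
      IntervalIntegrable (fun s => 1 / ρ s) volume c d := by
    intro c d hc hd
    exact (hinvc.mono (fun x hx => lt_of_lt_of_le (lt_min hc hd) hx.1)).intervalIntegrable
  have hinvnonneg : ∀ x > (0:ℝ), 0 ≤ 1 / ρ x := fun x hx => div_nonneg zero_le_one (hρpos x hx).le
  set C : ℝ := ∫ s in (0:ℝ)..t₀, g s with hCdef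
  -- key estimate
  have key : ∀ ε > (0:ℝ), (∫ s in ε..(ε + a), 1 / ρ s) ≤ C := by
    intro ε hε
    set φ : ℝ → ℝ := fun t => ∫ s in ε..(ε + v t), 1 / ρ s with hφdef
    set ψ : ℝ → ℝ := fun t => ∫ s in (0:ℝ)..t, g s with hψdef
    set h : ℝ → ℝ := fun t => ψ t - φ t with hhdef
    -- continuity of h on Icc 0 t₀
    have hvcont : ContinuousOn v (Set.Icc 0 t₀) := by
      have : IntegrableOn F (Set.uIcc 0 t₀) volume := by
        rw [uIcc_of_le ht₀]
        exact (hFc.mono (fun x hx => hx.1)).integrableOn_compact isCompact_Icc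
      have := intervalIntegral.continuousOn_primitive_interval this
      rwa [uIcc_of_le ht₀] at this
    have hψcont : ContinuousOn ψ (Set.Icc 0 t₀) := by
      have : IntegrableOn g (Set.uIcc 0 t₀) volume := by
        rw [uIcc_of_le ht₀]
        exact (hg.mono (fun x hx => hx.1)).integrableOn_compact isCompact_Icc
      have := intervalIntegral.continuousOn_primitive_interval this
      rwa [uIcc_of_le ht₀] at this
    have hGcont : ContinuousOn (fun y => ∫ s in ε..y, 1 / ρ s) (Set.Icc ε (ε + a)) := by
      have : IntegrableOn (fun s => 1 / ρ s) (Set.uIcc ε (ε + a)) volume := by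
        rw [uIcc_of_le (by linarith)]
        refine (hinvc.mono (fun x hx => lt_of_lt_of_le hε hx.1)).integrableOn_compact
          isCompact_Icc
      have := intervalIntegral.continuousOn_primitive_interval this
      rwa [uIcc_of_le (by linarith)] at this
    have hmaps : ∀ t ∈ Set.Icc (0:ℝ) t₀, ε + v t ∈ Set.Icc ε (ε + a) := by
      intro t ht
      constructor
      · linarith [hvnonneg t ht.1]
      · have := hvmono t t₀ ht.1 ht.2
        linarith
    have hφcont : ContinuousOn φ (Set.Icc 0 t₀) := by
      refine hGcont.comp (continuousOn_const.add hvcont) ?_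
      intro t ht
      exact hmaps t ht
    have hhcont : ContinuousOn h (Set.Icc 0 t₀) := hψcont.sub hφcont
    -- derivative on the interior
    have hmono : MonotoneOn h (Set.Icc 0 t₀) := by
      refine monotoneOn_of_hasDerivWithinAt_nonneg (convex_Icc 0 t₀) hhcont
        (f' := fun x => g x - (1 / ρ (ε + v x)) * F x) ?_ ?_
      · intro x hx
        rw [interior_Icc] at hx
        have hx0 : (0:ℝ) < x := hx.1
        have hψ' : HasDerivAt ψ (g x) x := by
          refine intervalIntegral.integral_hasDerivAt_right (hgint x hx0.le) ?_ ?_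
          · exact (hg.mono Ioi_subset_Ici_self).stronglyMeasurableAtFilter isOpen_Ioi x hx0
          · exact hg.continuousAt (Ici_mem_nhds hx0)
        have hv' : HasDerivAt v (F x) x := by
          refine intervalIntegral.integral_hasDerivAt_right (hFint 0 x le_rfl hx0.le) ?_ ?_
          · exact (hFc.mono Ioi_subset_Ici_self).stronglyMeasurableAtFilter isOpen_Ioi x hx0
          · exact hFc.continuousAt (Ici_mem_nhds hx0)
        set y : ℝ := ε + v x with hydef
        have hypos : 0 < y := by
          have := hvnonneg x hx0.le
          simp only [hydef]; linarith
        have hG' : HasDerivAt (fun z => ∫ s in ε..z, 1 / ρ s) (1 / ρ y) y := by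
          refine intervalIntegral.integral_hasDerivAt_right (hinvint ε y hε hypos) ?_ ?_
          · exact hinvc.stronglyMeasurableAtFilter isOpen_Ioi y hypos
          · exact hinvc.continuousAt (Ioi_mem_nhds hypos)
        have hinner : HasDerivAt (fun t => ε + v t) (F x) x := by
          exact hv'.const_add ε
        have hφ' : HasDerivAt φ ((1 / ρ y) * F x) x := by
          have := HasDerivAt.comp x hG' hinner
          exact this
        exact ((hψ'.sub hφ').hasDerivWithinAt)
      · intro x hx
        rw [interior_Icc] at hx
        have hx0 : (0:ℝ) < x := hx.1
        set y : ℝ := ε + v x with hydef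
        have hypos : 0 < y := by
          have := hvnonneg x hx0.le
          simp only [hydef]; linarith
        have hρy : 0 < ρ y := hρpos y hypos
        have huley : u x ≤ y := by
          have := hule x hx0.le
          simp only [hydef]; linarith
        have hρle : ρ (u x) ≤ ρ y :=
          hρmono (hunonneg x hx0.le) hypos.le huley
        have hgx : 0 ≤ g x := hgnonneg x hx0.le
        have : (1 / ρ y) * F x ≤ g x := by
          have h1 : F x ≤ g x * ρ y := by
            exact mul_le_mul_of_nonneg_left hρle hgx
          calc (1 / ρ y) * F x ≤ (1 / ρ y) * (g x * ρ y) := by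
                exact mul_le_mul_of_nonneg_left h1 (by positivity)
            _ = g x := by field_simp
        linarith
    have hmem0 : (0:ℝ) ∈ Set.Icc (0:ℝ) t₀ := ⟨le_rfl, ht₀⟩
    have hmemt : t₀ ∈ Set.Icc (0:ℝ) t₀ := ⟨ht₀, le_rfl⟩
    have := hmono hmem0 hmemt ht₀
    have hh0 : h 0 = 0 := by
      simp only [hhdef, hψdef, hφdef, integral_same, hv0, add_zero, integral_same, sub_zero]
    rw [hh0] at this
    simp only [hhdef, hψdef, hφdef] at this
    linarith [this]
  -- deduce bounded integrals on (ε, a]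
  have key2 : ∀ ε : ℝ, 0 < ε → ε ≤ a → (∫ s in ε..a, 1 / ρ s) ≤ C := by
    intro ε hε hεa
    have h1 : IntervalIntegrable (fun s => 1 / ρ s) volume ε a := hinvint ε a hε hapos
    have h2 : IntervalIntegrable (fun s => 1 / ρ s) volume a (ε + a) :=
      hinvint a (ε + a) hapos (by linarith)
    have hadd := intervalIntegral.integral_add_adjacent_intervals h1 h2
    have hnn : 0 ≤ ∫ s in a..(ε + a), 1 / ρ s :=
      intervalIntegral.integral_nonneg (by linarith)
        (fun x hx => hinvnonneg x (lt_of_lt_of_le hapos hx.1))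
    have := key ε hε
    linarith
  -- conclude integrability near 0, contradicting Osgood
  have hintOn : IntegrableOn (fun s => 1 / ρ s) (Set.Ioc 0 a) volume := by
    set εs : ℕ → ℝ := fun n => a / (n + 1) with hεs
    have hεpos : ∀ n : ℕ, 0 < εs n := by
      intro n
      apply div_pos hapos
      positivity
    have hεle : ∀ n : ℕ, εs n ≤ a := by
      intro n
      rw [hεs]
      rw [div_le_iff₀ (by positivity)]
      nlinarith [hapos]
    have htend : Filter.Tendsto εs Filter.atTop (nhds 0) := by
      have h1 := tendsto_one_div_add_atTop_nhds_zero_nat (𝕜 := ℝ)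
      have h2 := h1.const_mul a
      simpa [hεs, mul_one_div, div_eq_mul_inv] using h2
    refine MeasureTheory.integrableOn_Ioc_of_intervalIntegral_norm_bounded_left
      (f := fun s => 1 / ρ s) (l := Filter.atTop) (I := C) (a := εs) (a₀ := 0) (b := a)
      ?_ htend ?_
    · intro n
      exact (hinvint (εs n) a (hεpos n) hapos).1
    · refine Filter.Eventually.of_forall (fun n => ?_)
      have hcongr : (∫ x in Set.Ioc (εs n) a, ‖1 / ρ x‖) = ∫ x in Set.Ioc (εs n) a, 1 / ρ x := by
        refine MeasureTheory.setIntegral_congr_fun measurableSet_Ioc ?_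
        intro x hx
        exact Real.norm_of_nonneg (hinvnonneg x (lt_of_lt_of_le (hεpos n) hx.1.le))
      rw [hcongr, ← intervalIntegral.integral_of_le (hεle n)]
      exact key2 (εs n) (hεpos n) (hεle n)
  exact hOsgood a hapos
    ((intervalIntegrable_iff_integrableOn_Ioc_of_le hapos.le).mpr hintOn)
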